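/- Let 0 < t₁ ≤ t₂, set c₁ = cosh t₁ cosh t₂ and c₂ = sinh t₁ sinh t₂, and for θ ∈ ℝ let M(θ) = a_{t₁}·R(θ)·a_{t₂} be the product of matrices in SL(2,ℝ). Then for every continuous function F : ℝ → ℝ, (1/(2π)) ∫_0^{2π} F( trace(M(θ)·M(θ)ᵀ)/2 ) dθ = (1/π) ∫_{t₂−t₁}^{t₂+t₁} F(cosh r) · sinh r / √(c₂² − (c₁ − cosh r)²) dr. -/

import Mathlib

open scoped Real
open Matrix Set

noncomputable section

/-- The diagonal matrix `a_t = diag (e^{t/2}, e^{-t/2})` in `SL(2, ℝ)`. -/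
def aMat (t : ℝ) : Matrix (Fin 2) (Fin 2) ℝ :=
  !![Real.exp (t / 2), 0; 0, Real.exp (-t / 2)]

/-- The rotation matrix `R(θ)` in `SO(2)`. -/
def rotMat (θ : ℝ) : Matrix (Fin 2) (Fin 2) ℝ :=
  !![Real.cos θ, -Real.sin θ; Real.sin θ, Real.cos θ]

theorem transpose_fin_two' (a b c d : ℝ) :
    (!![a, b; c, d] : Matrix (Fin 2) (Fin 2) ℝ)ᵀ = !![a, c; b, d] := by
  ext i j; fin_cases i <;> fin_cases j <;> simp

theorem trace_key (t₁ t₂ θ : ℝ) :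
    Matrix.trace ((aMat t₁ * rotMat θ * aMat t₂) * (aMat t₁ * rotMat θ * aMat t₂)ᵀ) / 2
      = Real.cosh t₁ * Real.cosh t₂ + Real.sinh t₁ * Real.sinh t₂ * Real.cos (2*θ) := by
  have hM : aMat t₁ * rotMat θ * aMat t₂ =
      !![Real.exp (t₁/2) * Real.cos θ * Real.exp (t₂/2),
         -(Real.exp (t₁/2) * Real.sin θ * Real.exp (-t₂/2));
         Real.exp (-t₁/2) * Real.sin θ * Real.exp (t₂/2),
         Real.exp (-t₁/2) * Real.cos θ * Real.exp (-t₂/2)] := by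
    ext i j
    fin_cases i <;> fin_cases j <;>
      simp [aMat, rotMat, Matrix.mul_apply, Fin.sum_univ_two] <;> ring
  rw [hM]
  have h1 : Real.exp (-t₁ / 2) = (Real.exp (t₁ / 2))⁻¹ := by rw [← Real.exp_neg]; ring_nf
  have h2 : Real.exp (-t₂ / 2) = (Real.exp (t₂ / 2))⁻¹ := by rw [← Real.exp_neg]; ring_nf
  have h3 : Real.exp t₁ = (Real.exp (t₁ / 2)) ^ 2 := by rw [sq, ← Real.exp_add]; ring_nf
  have h4 : Real.exp t₂ = (Real.exp (t₂ / 2)) ^ 2 := by rw [sq, ← Real.exp_add]; ring_nf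
  have h5 : Real.exp (-t₁) = ((Real.exp (t₁ / 2)) ^ 2)⁻¹ := by rw [← h3, ← Real.exp_neg]
  have h6 : Real.exp (-t₂) = ((Real.exp (t₂ / 2)) ^ 2)⁻¹ := by rw [← h4, ← Real.exp_neg]
  have hs : Real.sin θ ^ 2 = 1 - Real.cos θ ^ 2 := by
    have := Real.sin_sq_add_cos_sq θ; linarith
  have e1 := (Real.exp_pos (t₁ / 2)).ne'
  have e2 := (Real.exp_pos (t₂ / 2)).ne'
  rw [transpose_fin_two', Matrix.mul_fin_two]
  simp [Matrix.trace_fin_two, Real.cosh_eq, Real.sinh_eq, Real.cos_two_mul]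
  rw [h1, h2, h3, h4, h5, h6]
  ring_nf
  rw [hs]
  field_simp
  ring

/-- Probability-normalized product formula for spherical classes in `SL(2, ℝ)`. -/
theorem sphClass_product_SL2R (t₁ t₂ : ℝ) (ht₁ : 0 < t₁) (ht : t₁ ≤ t₂)
    (c₁ c₂ : ℝ) (hc₁ : c₁ = Real.cosh t₁ * Real.cosh t₂)
    (hc₂ : c₂ = Real.sinh t₁ * Real.sinh t₂)
    (F : ℝ → ℝ) (hF : Continuous F) :
    (1 / (2 * π)) * ∫ θ in (0 : ℝ)..2 * π,
        F (Matrix.trace ((aMat t₁ * rotMat θ * aMat t₂) *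
            (aMat t₁ * rotMat θ * aMat t₂)ᵀ) / 2)
      = (1 / π) * ∫ r in t₂ - t₁..t₂ + t₁,
          F (Real.cosh r) * Real.sinh r / Real.sqrt (c₂ ^ 2 - (c₁ - Real.cosh r) ^ 2) := by
  set g : ℝ → ℝ := fun u => F (c₁ + c₂ * Real.cos u) with hg_def
  have hgc : Continuous g := hF.comp (by continuity)
  set a := t₂ - t₁ with ha_def
  set b := t₂ + t₁ with hb_def
  have ha0 : 0 ≤ a := by simp [ha_def]; linarith
  have hab : a < b := by simp [ha_def, hb_def]; linarith
  have hc2pos : 0 < c₂ := by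
    rw [hc₂]; exact mul_pos (Real.sinh_pos_iff.2 ht₁) (Real.sinh_pos_iff.2 (lt_of_lt_of_le ht₁ ht))
  have hcosh_a : Real.cosh a = c₁ - c₂ := by rw [ha_def, hc₁, hc₂, Real.cosh_sub]; ring
  have hcosh_b : Real.cosh b = c₁ + c₂ := by rw [hb_def, hc₁, hc₂, Real.cosh_add]; ring
  set S : ℝ → ℝ := fun r => Real.sqrt (c₂ ^ 2 - (c₁ - Real.cosh r) ^ 2) with hS_def
  set f : ℝ → ℝ := fun r => Real.arccos ((Real.cosh r - c₁) / c₂) with hf_def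
  set f' : ℝ → ℝ := fun r => -(Real.sinh r / S r) with hf'_def
  -- derivative of f on the open interval
  have hder : ∀ x ∈ Ioo a b, HasDerivAt f (f' x) x := by
    intro x hx
    have hx0 : 0 < x := lt_of_le_of_lt ha0 hx.1
    have hxa : Real.cosh a < Real.cosh x := by
      rw [Real.cosh_lt_cosh, abs_of_nonneg ha0, abs_of_nonneg hx0.le]; exact hx.1
    have hxb : Real.cosh x < Real.cosh b := by
      rw [Real.cosh_lt_cosh, abs_of_nonneg hx0.le, abs_of_nonneg (ha0.trans hab.le)]; exact hx.2
    set u : ℝ := (Real.cosh x - c₁) / c₂ with hu_def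
    have hu1 : -1 < u := by
      rw [hu_def, lt_div_iff₀ hc2pos]; rw [hcosh_a] at hxa; linarith
    have hu2 : u < 1 := by
      rw [hu_def, div_lt_one hc2pos]; rw [hcosh_b] at hxb; linarith
    have hinner : HasDerivAt (fun r => (Real.cosh r - c₁) / c₂) (Real.sinh x / c₂) x :=
      ((Real.hasDerivAt_cosh x).sub_const c₁).div_const c₂
    have harc := (Real.hasDerivAt_arccos hu1.ne' hu2.ne).comp x hinner
    have h1u : 0 < 1 - u ^ 2 := by nlinarith
    have hrad : c₂ ^ 2 - (c₁ - Real.cosh x) ^ 2 = (1 - u ^ 2) * c₂ ^ 2 := by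
      rw [hu_def]; field_simp; ring
    have hkey : S x = Real.sqrt (1 - u ^ 2) * c₂ := by
      simp only [hS_def]
      rw [hrad, Real.sqrt_mul h1u.le, Real.sqrt_sq hc2pos.le]
    have hsq_pos : 0 < Real.sqrt (1 - u ^ 2) := Real.sqrt_pos.2 h1u
    refine HasDerivAt.congr_deriv harc ?_
    rw [hf'_def]
    simp only
    rw [hkey]
    field_simp
  have hSnonneg : ∀ r, 0 ≤ S r := fun r => Real.sqrt_nonneg _
  -- integrability of -f' = sinh r / S r on [a, b]
  have hint_Ioc : MeasureTheory.IntegrableOn (fun r => Real.sinh r / S r) (Ioc a b) :=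
    intervalIntegral.integrableOn_deriv_of_nonneg
      (g := fun r => -f r)
      (((Real.continuous_arccos.comp (by continuity)).neg).continuousOn)
      (fun x hx => by have h := (hder x hx).neg; simp only [hf'_def, neg_neg] at h; exact h)
      (fun x hx => div_nonneg (Real.sinh_nonneg_iff.2 (le_of_lt (lt_of_le_of_lt ha0 hx.1)))
        (hSnonneg x))
  -- endpoint values of f
  have hfa : f a = π := by
    have : (Real.cosh a - c₁) / c₂ = -1 := by rw [hcosh_a]; field_simp; ring
    rw [hf_def]; simp only; rw [this, Real.arccos_neg_one]
  have hfb : f b = 0 := by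
    have : (Real.cosh b - c₁) / c₂ = 1 := by rw [hcosh_b]; field_simp; ring
    rw [hf_def]; simp only; rw [this, Real.arccos_one]
  have hfc : Continuous f := Real.continuous_arccos.comp (by continuity)
  -- integrability of f' • (g ∘ f) on [[a, b]]
  have hint_f' : IntervalIntegrable f' MeasureTheory.volume a b := by
    rw [intervalIntegrable_iff_integrableOn_Ioc_of_le hab.le]
    have h := hint_Ioc.neg
    rwa [show (-(fun r => Real.sinh r / S r)) = f' from by funext r; simp [hf'_def]] at h
  have hg2 : MeasureTheory.IntegrableOn (fun x => f' x • (g ∘ f) x) (Set.uIcc a b)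
      MeasureTheory.volume := by
    rw [uIcc_of_le hab.le, ← intervalIntegrable_iff_integrableOn_Icc_of_le hab.le]
    have := hint_f'.mul_continuousOn (g := fun x => g (f x))
      ((hgc.comp hfc).continuousOn)
    simpa [smul_eq_mul, Function.comp] using this
  -- the substitution
  have hmin : min a b = a := min_eq_left hab.le
  have hmax : max a b = b := max_eq_right hab.le
  have hsub : (∫ x in a..b, f' x • (g ∘ f) x) = ∫ u in f a..f b, g u := by
    apply intervalIntegral.integral_comp_smul_deriv''' hfc.continuousOn
    · rw [hmin, hmax]
      exact fun x hx => ((hder x hx).hasDerivWithinAt)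
    · exact hgc.continuousOn
    · exact hgc.continuousOn.integrableOn_compact (isCompact_uIcc.image hfc)
    · exact hg2
  -- identify the RHS integral
  have hR : (∫ r in a..b, F (Real.cosh r) * Real.sinh r / S r) = ∫ φ in (0:ℝ)..π, g φ := by
    have hcongr : (∫ r in a..b, F (Real.cosh r) * Real.sinh r / S r)
        = -∫ x in a..b, f' x • (g ∘ f) x := by
      rw [← intervalIntegral.integral_neg]
      apply intervalIntegral.integral_congr
      intro x hx
      rw [uIcc_of_le hab.le] at hx
      have hx0 : 0 ≤ x := le_trans ha0 hx.1
      have hxa : Real.cosh a ≤ Real.cosh x := by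
        rw [Real.cosh_le_cosh, abs_of_nonneg ha0, abs_of_nonneg hx0]; exact hx.1
      have hxb : Real.cosh x ≤ Real.cosh b := by
        rw [Real.cosh_le_cosh, abs_of_nonneg hx0, abs_of_nonneg (ha0.trans hab.le)]; exact hx.2
      have hu1 : -1 ≤ (Real.cosh x - c₁) / c₂ := by
        rw [le_div_iff₀ hc2pos]; rw [hcosh_a] at hxa; linarith
      have hu2 : (Real.cosh x - c₁) / c₂ ≤ 1 := by
        rw [div_le_one hc2pos]; rw [hcosh_b] at hxb; linarith
      have hgf : g (f x) = F (Real.cosh x) := by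
        rw [hg_def, hf_def]
        simp only
        rw [Real.cos_arccos hu1 hu2]
        congr 1
        field_simp; ring
      simp only [Function.comp, smul_eq_mul, hf'_def]
      rw [hgf]
      ring
    rw [hcongr, hsub, hfa, hfb, intervalIntegral.integral_symm]
    simp
  -- reduce the LHS to ∫ g over [0, 2π]
  have hLcongr : (∫ θ in (0:ℝ)..2 * π,
      F (Matrix.trace ((aMat t₁ * rotMat θ * aMat t₂) * (aMat t₁ * rotMat θ * aMat t₂)ᵀ) / 2))
      = ∫ θ in (0:ℝ)..2 * π, g (2 * θ) := by
    apply intervalIntegral.integral_congr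
    intro θ _
    show F _ = g (2 * θ)
    simp only [hg_def]
    rw [trace_key, hc₁, hc₂]
  have hper : Function.Periodic g (2 * π) := fun u => by
    simp only [hg_def]; rw [Real.cos_add_two_pi]
  have hL2 : (∫ θ in (0:ℝ)..2 * π, g (2 * θ)) = (2:ℝ)⁻¹ * ∫ x in (0:ℝ)..4 * π, g x := by
    have h := intervalIntegral.integral_comp_mul_left g (a := 0) (b := 2 * π)
      (c := (2:ℝ)) two_ne_zero
    rw [h]
    norm_num
    ring_nf
  have hL4 : (∫ x in (0:ℝ)..4 * π, g x) = 2 * ∫ x in (0:ℝ)..2 * π, g x := by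
    have hadj : (∫ x in (0:ℝ)..2 * π, g x) + (∫ x in (2*π:ℝ)..4 * π, g x)
        = ∫ x in (0:ℝ)..4 * π, g x :=
      intervalIntegral.integral_add_adjacent_intervals
        (hgc.intervalIntegrable _ _) (hgc.intervalIntegrable _ _)
    have hshift : (∫ x in (2*π:ℝ)..4 * π, g x) = ∫ x in (0:ℝ)..2 * π, g x := by
      have := hper.intervalIntegral_add_eq (2 * π) 0
      rw [zero_add] at this
      rw [show (4:ℝ) * π = 2 * π + 2 * π by ring]
      exact this
    rw [← hadj, hshift]; ring
  have hhalf : (∫ x in (0:ℝ)..2 * π, g x) = 2 * ∫ φ in (0:ℝ)..π, g φ := by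
    have hadj : (∫ x in (0:ℝ)..π, g x) + (∫ x in (π:ℝ)..2 * π, g x)
        = ∫ x in (0:ℝ)..2 * π, g x :=
      intervalIntegral.integral_add_adjacent_intervals
        (hgc.intervalIntegrable _ _) (hgc.intervalIntegrable _ _)
    have hrefl : (∫ x in (π:ℝ)..2 * π, g x) = ∫ x in (0:ℝ)..π, g x := by
      have h := intervalIntegral.integral_comp_sub_left (a := (0:ℝ)) (b := π) g (2 * π)
      rw [show 2 * π - π = π by ring, show 2 * π - 0 = 2 * π by ring] at h
      rw [← h]
      apply intervalIntegral.integral_congr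
      intro x _
      simp only [hg_def]
      rw [show 2 * π - x = -x + 2 * π by ring, Real.cos_add_two_pi, Real.cos_neg]
    rw [← hadj, hrefl]; ring
  -- put everything together
  have hπ : (π:ℝ) ≠ 0 := Real.pi_ne_zero
  rw [hLcongr, hL2, hL4, hhalf]
  rw [show (∫ r in t₂ - t₁..t₂ + t₁,
      F (Real.cosh r) * Real.sinh r / Real.sqrt (c₂ ^ 2 - (c₁ - Real.cosh r) ^ 2))
      = ∫ r in a..b, F (Real.cosh r) * Real.sinh r / S r from rfl]
  rw [hR]
  field_simp
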